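/- Let G₁ and G₂ be groups and let f : G₁ → G₂ be a map satisfying f(a²ba⁻¹) = f(a)²·f(b)·f(a)⁻¹ for all a,b ∈ G₁. Then f(ab) = f(a)·f(ba⁻¹)·f(a) for all a,b ∈ G₁. -/
import Mathlib


/-- A map preserving the gyrogroup operation `a ⊙ b = a² b a⁻¹` satisfies
`f (ab) = f a · f (b a⁻¹) · f a`. -/
theorem gyro_hom_eq_4 (G₁ G₂ : Type*) [Group G₁] [Group G₂] (f : G₁ → G₂)
    (hf : ∀ a b : G₁, f (a ^ 2 * b * a⁻¹) = (f a) ^ 2 * f b * (f a)⁻¹) :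
    ∀ a b : G₁, f (a * b) = f a * f (b * a⁻¹) * f a := by
  have h1 : f 1 = 1 := by
    have h := hf 1 1
    simp only [one_pow, mul_one, inv_one, one_mul] at h
    have h' : f 1 * f 1 = 1 * f 1 := by
      rw [one_mul]; nth_rewrite 3 [h]; rw [pow_two]; group
    exact mul_right_cancel h'
  have hinv : ∀ u : G₁, f u⁻¹ = (f u)⁻¹ := by
    intro u
    have h := hf u u⁻¹
    have harg : u ^ 2 * u⁻¹ * u⁻¹ = 1 := by group
    rw [harg, h1] at h
    have : (f u ^ 2)⁻¹ * 1 * f u = f u⁻¹ := by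
      rw [h]; group
    rw [← this]; group
  intro a b
  set u : G₁ := b * a⁻¹ with hu
  set s : G₁ := u ^ 2 * a * u⁻¹ with hs
  have h2 : f s = f u ^ 2 * f a * (f u)⁻¹ := hf u a
  have h3 : f (s ^ 2) = f s ^ 2 := by
    have h := hf s s
    have harg : s ^ 2 * s * s⁻¹ = s ^ 2 := by group
    rw [harg] at h
    rw [h]; group
  have h4 := hf u⁻¹ (s ^ 2)
  have harg : u⁻¹ ^ 2 * s ^ 2 * u⁻¹⁻¹ = a * b := by
    rw [hs, hu]
    simp only [pow_two, mul_inv_rev, inv_inv]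
    group
  rw [harg, hinv, h3, h2] at h4
  rw [h4]
  simp only [pow_two, mul_inv_rev, inv_inv]
  group
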